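/- Every partition of n ≥ 3 can be reconstructed from its set of 1-deletions: if λ and ν are partitions of n ≥ 3 with the same set of 1-deletions, then λ = ν. -/
import Mathlib


/-- A partition: a nonincreasing sequence of naturals (rows indexed from 0),
with finitely many nonzero parts. -/
def IsPartition (f : ℕ → ℕ) : Prop :=
  (∀ ⦃i j : ℕ⦄, i ≤ j → f j ≤ f i) ∧ {i | f i ≠ 0}.Finite

/-- The number of cells of a partition. -/
noncomputable def psize (f : ℕ → ℕ) : ℕ := ∑ᶠ i, f i

/-- `δ` is a `k`-deletion of `f`: a partition contained in `f` with `k` fewer cells. -/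
def IsDeletion (k : ℕ) (δ f : ℕ → ℕ) : Prop :=
  IsPartition δ ∧ (∀ i, δ i ≤ f i) ∧ psize f = psize δ + k

/-- The conjugate: `conj f c` is the number of cells in (0-indexed) column `c`. -/
noncomputable def conj (f : ℕ → ℕ) (c : ℕ) : ℕ := Set.ncard {i | c < f i}

/-- If `δ ≤ f` and `|f| = |δ| + 1` then `f` is `δ` plus one box. -/
lemma exists_add_one (f δ : ℕ → ℕ) (hf : IsPartition f) (hle : ∀ k, δ k ≤ f k)
    (hs : psize f = psize δ + 1) :
    ∃ i, f i = δ i + 1 ∧ ∀ k, k ≠ i → f k = δ k := by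
  classical
  set s := hf.2.toFinset with hsdef
  have hmemf : ∀ k, k ∈ s ↔ f k ≠ 0 := by
    intro k; simp [hsdef, Set.Finite.mem_toFinset]
  have hsf : psize f = ∑ k ∈ s, f k := by
    apply finsum_eq_finset_sum_of_support_subset
    intro k hk; simp only [Function.mem_support] at hk
    exact (hmemf k).mpr hk
  have hsδ : psize δ = ∑ k ∈ s, δ k := by
    apply finsum_eq_finset_sum_of_support_subset
    intro k hk; simp only [Function.mem_support] at hk
    exact (hmemf k).mpr (by have := hle k; omega)
  have hsplit : ∑ k ∈ s, f k = ∑ k ∈ s, δ k + ∑ k ∈ s, (f k - δ k) := by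
    rw [← Finset.sum_add_distrib]
    apply Finset.sum_congr rfl
    intro k _; have := hle k; omega
  have hone : ∑ k ∈ s, (f k - δ k) = 1 := by omega
  obtain ⟨i, hi, hine⟩ : ∃ i ∈ s, f i - δ i ≠ 0 := by
    apply Finset.exists_ne_zero_of_sum_ne_zero
    omega
  have herase : ∑ k ∈ s.erase i, (f k - δ k) + (f i - δ i) = 1 := by
    rw [Finset.sum_erase_add s _ hi]; exact hone
  have hone' : f i - δ i = 1 := by omega
  have hzero : ∀ k ∈ s.erase i, f k - δ k = 0 := by
    intro k hk
    have : ∑ k ∈ s.erase i, (f k - δ k) = 0 := by omega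
    exact (Finset.sum_eq_zero_iff.mp this) k hk
  refine ⟨i, by have := hle i; omega, ?_⟩
  intro k hk
  by_cases hks : k ∈ s
  · have := hzero k (Finset.mem_erase.mpr ⟨hk, hks⟩)
    have := hle k; omega
  · have hk0 : f k = 0 := by
      by_contra h0; exact hks ((hmemf k).mpr h0)
    have := hle k; omega

/-- Removing a box at a removable row gives a 1-deletion. -/
lemma del_of_corner (f : ℕ → ℕ) (hf : IsPartition f) (m : ℕ) (hm : f (m+1) < f m) :
    IsDeletion 1 (fun k => if k = m then f m - 1 else f k) f := by
  classical
  have hmono : ∀ ⦃a b : ℕ⦄, a ≤ b →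
      (if b = m then f m - 1 else f b) ≤ (if a = m then f m - 1 else f a) := by
    intro a b hab
    rcases eq_or_ne b m with hb | hb
    · rcases eq_or_ne a m with ha | ha
      · rw [if_pos hb, if_pos ha]
      · rw [if_pos hb, if_neg ha]
        have h4 := hf.1 hab
        rw [hb] at h4
        omega
    · rcases eq_or_ne a m with ha | ha
      · rw [if_neg hb, if_pos ha]
        have hb' : m + 1 ≤ b := by omega
        have := hf.1 hb'
        omega
      · rw [if_neg hb, if_neg ha]
        exact hf.1 hab
  have hle : ∀ k, (if k = m then f m - 1 else f k) ≤ f k := by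
    intro k
    rcases eq_or_ne k m with hk | hk
    · rw [if_pos hk]; subst hk; omega
    · rw [if_neg hk]
  have hfin : {k | (if k = m then f m - 1 else f k) ≠ 0}.Finite := by
    apply hf.2.subset
    intro k hk
    simp only [Set.mem_setOf_eq] at *
    rcases eq_or_ne k m with hkm | hkm
    · rw [if_pos hkm] at hk; subst hkm; omega
    · rwa [if_neg hkm] at hk
  refine ⟨⟨hmono, hfin⟩, hle, ?_⟩
  set s := hf.2.toFinset with hsdef
  have hmemf : ∀ k, k ∈ s ↔ f k ≠ 0 := by
    intro k; simp [hsdef, Set.Finite.mem_toFinset]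
  have hmem : m ∈ s := (hmemf m).mpr (by omega)
  have hsf : psize f = ∑ k ∈ s, f k := by
    apply finsum_eq_finset_sum_of_support_subset
    intro k hk; simp only [Function.mem_support] at hk
    exact (hmemf k).mpr hk
  have hsδ : psize (fun k => if k = m then f m - 1 else f k)
      = ∑ k ∈ s, (if k = m then f m - 1 else f k) := by
    apply finsum_eq_finset_sum_of_support_subset
    intro k hk; simp only [Function.mem_support] at hk
    exact (hmemf k).mpr (by have := hle k; omega)
  have h1 : ∑ k ∈ s.erase m, f k + f m = ∑ k ∈ s, f k := Finset.sum_erase_add s f hmem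
  have h2 : ∑ k ∈ s.erase m, (if k = m then f m - 1 else f k) + (if m = m then f m - 1 else f m)
      = ∑ k ∈ s, (if k = m then f m - 1 else f k) :=
    Finset.sum_erase_add s _ hmem
  have h3 : ∑ k ∈ s.erase m, f k = ∑ k ∈ s.erase m, (if k = m then f m - 1 else f k) := by
    apply Finset.sum_congr rfl
    intro k hk
    have hkm := Finset.ne_of_mem_erase hk
    rw [if_neg hkm]
  rw [if_pos rfl] at h2
  omega

/-- A nonempty partition has a removable row. -/
lemma exists_corner (f : ℕ → ℕ) (hf : IsPartition f) (hpos : psize f ≠ 0) :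
    ∃ m, f (m+1) < f m := by
  classical
  set s := hf.2.toFinset with hsdef
  have hmemf : ∀ k, k ∈ s ↔ f k ≠ 0 := by
    intro k; simp [hsdef, Set.Finite.mem_toFinset]
  have hne : s.Nonempty := by
    rcases Finset.eq_empty_or_nonempty s with he | hne
    · exfalso
      apply hpos
      have : psize f = ∑ k ∈ s, f k := by
        apply finsum_eq_finset_sum_of_support_subset
        intro k hk; simp only [Function.mem_support] at hk
        exact (hmemf k).mpr hk
      rw [this, he, Finset.sum_empty]
    · exact hne
  set m := s.max' hne with hmdef
  have hmpos : f m ≠ 0 := (hmemf m).mp (s.max'_mem hne)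
  have hnext : f (m+1) = 0 := by
    by_contra h0
    have : m + 1 ∈ s := (hmemf _).mpr h0
    have := s.le_max' _ this
    omega
  exact ⟨m, by omega⟩

/-- If `i` is the only removable row, `f` is a rectangle with `i+1` rows. -/
lemma const_of_unique_corner (f : ℕ → ℕ) (hf : IsPartition f) (i : ℕ)
    (hu : ∀ m, f (m+1) < f m → m = i) :
    (∀ k ≤ i, f k = f i) ∧ (∀ k, i < k → f k = 0) := by
  have step : ∀ m, m ≠ i → f m = f (m+1) := by
    intro m hm
    have h1 : f (m+1) ≤ f m := hf.1 (Nat.le_succ m)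
    have h2 : ¬ f (m+1) < f m := fun hlt => hm (hu m hlt)
    omega
  have up : ∀ d, f (i+1+d) = f (i+1) := by
    intro d; induction d with
    | zero => rfl
    | succ d ih =>
        have e : i+1+(d+1) = (i+1+d)+1 := by omega
        rw [e, ← step (i+1+d) (by omega), ih]
  have hzero : f (i+1) = 0 := by
    by_contra hne
    have hinf : {k | f k ≠ 0}.Infinite := by
      apply Set.infinite_of_injective_forall_mem (f := fun d : ℕ => i+1+d)
      · intro a b hab; simp only at hab; omega
      · intro d
        simp only [Set.mem_setOf_eq]
        rw [up d]; exact hne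
    exact hinf hf.2
  constructor
  · have down : ∀ d, d ≤ i → f (i - d) = f i := by
      intro d; induction d with
      | zero => simp
      | succ d ih =>
          intro hd
          have h1 : i - (d+1) ≠ i := by omega
          have h2 : i - (d+1) + 1 = i - d := by omega
          rw [step _ h1, h2]
          exact ih (by omega)
    intro k hk
    have := down (i - k) (by omega)
    rwa [show i - (i-k) = k by omega] at this
  · intro k hk
    have := up (k - (i+1))
    rw [show i+1+(k-(i+1)) = k by omega] at this
    rw [this, hzero]

lemma aux_contra (n : ℕ) (hn : 3 ≤ n) (f g : ℕ → ℕ)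
    (hfn : psize f = n)
    (i j : ℕ) (hij : i < j)
    (hfc : ∀ k ≤ i, f k = f i) (hf0 : ∀ k, i < k → f k = 0)
    (hgc : ∀ k ≤ j, g k = g j) (hg0 : ∀ k, j < k → g k = 0)
    (hfi : f i = g i + 1) (hgj : g j = f j + 1)
    (heq : ∀ k, k ≠ i → k ≠ j → f k = g k) : False := by
  have hfj : f j = 0 := hf0 j hij
  have hgj1 : g j = 1 := by omega
  have hgi : g i = 1 := by rw [hgc i (le_of_lt hij), hgj1]
  have hfi2 : f i = 2 := by omega
  have hi0 : i = 0 := by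
    by_contra h0
    have h1 : f 0 = g 0 := heq 0 (Ne.symm h0) (by omega)
    have h2 : f 0 = f i := hfc 0 (Nat.zero_le i)
    have h3 : g 0 = g j := hgc 0 (Nat.zero_le j)
    omega
  subst hi0
  have hj1 : j = 1 := by
    by_contra h1
    have h2 : f 1 = g 1 := heq 1 (by omega) (by omega)
    have h3 : g 1 = g j := hgc 1 (by omega)
    have h4 : f 1 = 0 := hf0 1 (by omega)
    omega
  have hps : psize f = f 0 := by
    rw [psize]
    exact finsum_eq_single f 0 (fun k hk => hf0 k (by omega))
  omega

/-- Every partition of n ≥ 3 is reconstructible from its set of 1-deletions. -/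
theorem one_deletion_reconstruction (n : ℕ) (hn : 3 ≤ n)
    (f g : ℕ → ℕ) (hf : IsPartition f) (hg : IsPartition g)
    (hfn : psize f = n) (hgn : psize g = n)
    (h : ∀ δ : ℕ → ℕ, IsDeletion 1 δ f ↔ IsDeletion 1 δ g) :
    f = g := by
  classical
  obtain ⟨i, hi⟩ := exists_corner f hf (by omega)
  have hdf := del_of_corner f hf i hi
  have hdg := (h _).mp hdf
  have hfi0 : 1 ≤ f i := by omega
  have hfi : ∀ k, f k = (if k = i then f i - 1 else f k) + (if k = i then 1 else 0) := by
    intro k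
    rcases eq_or_ne k i with hk | hk
    · rw [if_pos hk, if_pos hk]; subst hk; omega
    · rw [if_neg hk, if_neg hk]; omega
  obtain ⟨j, hgj, hgk⟩ := exists_add_one g _ hg hdg.2.1 hdg.2.2
  by_cases hij : i = j
  · funext k
    rcases eq_or_ne k i with hk | hk
    · subst hk
      have h1 := hfi k
      rw [if_pos rfl, if_pos rfl] at h1
      rw [← hij] at hgj
      rw [if_pos rfl] at hgj
      omega
    · have h1 := hfi k
      rw [if_neg hk, if_neg hk] at h1
      have h2 := hgk k (by rw [← hij]; exact hk)
      rw [if_neg hk] at h2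
      omega
  · exfalso
    have hfkk : ∀ k, k ≠ i → f k = (if k = i then f i - 1 else f k) := by
      intro k hk; rw [if_neg hk]
    have key1 : f i = g i + 1 := by
      have h2 := hgk i hij
      rw [if_pos rfl] at h2
      omega
    have key2 : g j = f j + 1 := by
      rw [if_neg (Ne.symm hij)] at hgj
      omega
    have keyeq : ∀ k, k ≠ i → k ≠ j → f k = g k := by
      intro k h1 h2
      have h3 := hgk k h2
      rw [if_neg h1] at h3
      omega
    have uniq_f : ∀ m, f (m+1) < f m → m = i := by
      intro m hm
      by_contra hmi
      have hd := del_of_corner f hf m hm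
      have hd' := (h _).mp hd
      have hle : (if i = m then f m - 1 else f i) ≤ g i := hd'.2.1 i
      rw [if_neg (fun hh => hmi hh.symm)] at hle
      omega
    have uniq_g : ∀ m, g (m+1) < g m → m = j := by
      intro m hm
      by_contra hmj
      have hd := del_of_corner g hg m hm
      have hd' := (h _).mpr hd
      have hle : (if j = m then g m - 1 else g j) ≤ f j := hd'.2.1 j
      rw [if_neg (fun hh => hmj hh.symm)] at hle
      omega
    have cf := const_of_unique_corner f hf i uniq_f
    have cg := const_of_unique_corner g hg j uniq_g
    rcases lt_or_gt_of_ne hij with hlt | hgt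
    · exact aux_contra n hn f g hfn i j hlt cf.1 cf.2 cg.1 cg.2 key1 key2 keyeq
    · exact aux_contra n hn g f hgn j i hgt cg.1 cg.2 cf.1 cf.2 key2 key1
        (fun k h1 h2 => (keyeq k h2 h1).symm)
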